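/- Let f: ℝⁿ → ℝ be differentiable and strongly convex with parameter K > 0. Then its convex conjugate f* has gradient ∇f* that is Lipschitz continuous with constant 1/K: for all x, y, ‖∇f*(x) - ∇f*(y)‖ ≤ (1/K)‖x - y‖. -/

import Mathlib

open Set

local notation "⟪" x ", " y "⟫" => inner (𝕜 := ℝ) x y

section Aux

variable {F : Type*} [NormedAddCommGroup F] [InnerProductSpace ℝ F] [CompleteSpace F]

/-- First-order condition for a convex differentiable function. -/
lemma aux_foc {g : F → ℝ} (hg : ConvexOn ℝ Set.univ g) {z u : F}
    (hu : HasGradientAt g u z) (w : F) : g z + ⟪u, w - z⟫ ≤ g w := by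
  rcases eq_or_ne w z with rfl | hne
  · simp
  · set d := w - z with hd
    have hline : ∀ t : ℝ, z + t • d = (AffineMap.lineMap z w) t := by
      intro t; simp [AffineMap.lineMap_apply, hd]; module
    have hφconv : ConvexOn ℝ Set.univ (fun t : ℝ => g (z + t • d)) := by
      have := (hg.comp_affineMap (AffineMap.lineMap z w : ℝ →ᵃ[ℝ] F))
      convert this.subset (subset_preimage_univ) convex_univ using 2 with t
      case e'_12 =>
        rw [hline]
        rfl
      all_goals rfl
    have hderiv : HasDerivAt (fun t : ℝ => g (z + t • d)) ⟪u, d⟫ 0 := by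
      have hl : HasDerivAt (fun t : ℝ => z + t • d) d 0 := by
        simpa using ((hasDerivAt_id (0:ℝ)).smul_const d).const_add z
      have hg' : HasFDerivAt g (InnerProductSpace.toDual ℝ F u) (z + (0:ℝ) • d) := by
        rw [hasGradientAt_iff_hasFDerivAt] at hu
        simpa using hu
      exact (hg'.comp_hasDerivAt 0 hl)
    have := hφconv.le_slope_of_hasDerivAt (mem_univ (0:ℝ)) (mem_univ (1:ℝ))
      one_pos hderiv
    rw [slope_def_field] at this
    simp only [zero_smul, add_zero, one_smul] at this
    have : ⟪u, d⟫ ≤ g (z + d) - g z := by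
      calc ⟪u, d⟫ ≤ _ := this
        _ = g (z + d) - g z := by norm_num
    have hzd : z + d = w := by rw [hd]; abel
    rw [hzd] at this
    linarith

/-- If `y ↦ g y - ⟪z, y⟫` has a global minimum at `u` and `g` is differentiable there,
then `∇ g u = z`. -/
lemma aux_min {g : F → ℝ} {z u : F} (hd : DifferentiableAt ℝ g u)
    (hmin : ∀ y, g u - ⟪z, u⟫ ≤ g y - ⟪z, y⟫) : gradient g u = z := by
  have hg : HasFDerivAt g (InnerProductSpace.toDual ℝ F (gradient g u)) u := by
    have := hd.hasGradientAt
    rwa [hasGradientAt_iff_hasFDerivAt] at this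
  have hz : HasFDerivAt (fun y => ⟪z, y⟫) (InnerProductSpace.toDual ℝ F z : F →L[ℝ] ℝ) u :=
    (InnerProductSpace.toDual ℝ F z).hasFDerivAt
  have hh : HasFDerivAt (fun y => g y - ⟪z, y⟫)
      (InnerProductSpace.toDual ℝ F (gradient g u) - InnerProductSpace.toDual ℝ F z) u :=
    hg.sub hz
  have hloc : IsLocalMin (fun y => g y - ⟪z, y⟫) u :=
    Filter.Eventually.of_forall hmin
  have h0 := hloc.hasFDerivAt_eq_zero hh
  have h1 : InnerProductSpace.toDual ℝ F (gradient g u - z)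
      = InnerProductSpace.toDual ℝ F 0 := by
    rw [map_sub, map_zero]; exact h0
  exact sub_eq_zero.mp ((InnerProductSpace.toDual ℝ F).injective h1)

end Aux

/-- If `f : ℝⁿ → ℝ` is differentiable and `K`-strongly convex, then the gradient of its
convex conjugate `f*` (assumed finite and differentiable) is Lipschitz with constant `1/K`. -/
theorem stmt4 {n : ℕ} (K : ℝ) (hK : 0 < K)
    (f fstar : EuclideanSpace ℝ (Fin n) → ℝ)
    (hf : Differentiable ℝ f)
    (hsc : ∀ x y, f x + inner (𝕜 := ℝ) (gradient f x) (y - x) + K / 2 * ‖y - x‖ ^ 2 ≤ f y)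
    (hconj : ∀ z, IsLUB (Set.range fun x => inner (𝕜 := ℝ) z x - f x) (fstar z))
    (hdstar : Differentiable ℝ fstar) :
    ∀ x y, ‖gradient fstar x - gradient fstar y‖ ≤ (1 / K) * ‖x - y‖ := by
  -- Fenchel–Young inequality
  have FY : ∀ z x, ⟪z, x⟫ - f x ≤ fstar z := fun z x => (hconj z).1 ⟨x, rfl⟩
  -- plain convexity lower bound
  have hlow : ∀ x y, f x + ⟪gradient f x, y - x⟫ ≤ f y := by
    intro x y
    have h := hsc x y
    nlinarith [sq_nonneg ‖y - x‖, hK.le, mul_nonneg (div_nonneg hK.le (by norm_num : (0:ℝ) ≤ 2)) (sq_nonneg ‖y - x‖)]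
  -- value of the conjugate at gradients of f
  have stepA : ∀ x, fstar (gradient f x) = ⟪gradient f x, x⟫ - f x := by
    intro x
    refine (hconj (gradient f x)).unique (IsGreatest.isLUB ⟨⟨x, rfl⟩, ?_⟩)
    rintro v ⟨y, rfl⟩
    have h := hlow x y
    have hi : ⟪gradient f x, y - x⟫ = ⟪gradient f x, y⟫ - ⟪gradient f x, x⟫ :=
      inner_sub_right _ _ _
    simp only []
    linarith
  -- fstar is convex
  have stepConv : ConvexOn ℝ Set.univ fstar := by
    refine ⟨convex_univ, fun z _ w _ a b ha hb hab => ?_⟩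
    refine (hconj _).2 ?_
    rintro v ⟨x, rfl⟩
    have h1 := FY z x
    have h2 := FY w x
    have hin : ⟪a • z + b • w, x⟫ = a * ⟪z, x⟫ + b * ⟪w, x⟫ := by
      rw [inner_add_left, real_inner_smul_left, real_inner_smul_left]
    simp only []
    rw [hin, smul_eq_mul, smul_eq_mul]
    have key := add_le_add (mul_le_mul_of_nonneg_left h1 ha) (mul_le_mul_of_nonneg_left h2 hb)
    have hfx : a * (⟪z, x⟫ - f x) + b * (⟪w, x⟫ - f x)
        = a * ⟪z, x⟫ + b * ⟪w, x⟫ - f x := by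
      linear_combination (-(f x)) * hab
    linarith
  -- first-order condition for fstar
  have stepFOC : ∀ z w, fstar z + ⟪gradient fstar z, w - z⟫ ≤ fstar w := fun z w =>
    aux_foc stepConv (hdstar z).hasGradientAt w
  -- Fenchel equality at u = ∇ fstar z
  have stepEq : ∀ z, fstar z = ⟪z, gradient fstar z⟫ - f (gradient fstar z) := by
    intro z
    set u := gradient fstar z with hu
    have hle : fstar z ≤ ⟪z, u⟫ - f u := by
      have h := stepFOC z (gradient f u)
      rw [stepA u] at h
      have e1 : ⟪u, gradient f u - z⟫ = ⟪u, gradient f u⟫ - ⟪u, z⟫ := inner_sub_right _ _ _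
      have e2 : ⟪gradient f u, u⟫ = ⟪u, gradient f u⟫ := real_inner_comm _ _
      have e3 : ⟪z, u⟫ = ⟪u, z⟫ := real_inner_comm _ _
      linarith
    have hge := FY z u
    linarith
  -- ∇f (∇fstar z) = z
  have stepGrad : ∀ z, gradient f (gradient fstar z) = z := by
    intro z
    set u := gradient fstar z with hu
    apply aux_min (hf u)
    intro y
    have h1 := FY z y
    have h2 := stepEq z
    rw [← hu] at h2
    linarith
  -- conclude
  intro x y
  set u := gradient fstar x with hux
  set v := gradient fstar y with hvy
  have h1 := hsc u v
  have h2 := hsc v u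
  rw [hux, stepGrad x, ← hux] at h1
  rw [hvy, stepGrad y, ← hvy] at h2
  -- from h1, h2 : strong monotonicity
  have hmono : K * ‖u - v‖ ^ 2 ≤ ⟪x - y, u - v⟫ := by
    have e1 : ⟪x, v - u⟫ = ⟪x, v⟫ - ⟪x, u⟫ := inner_sub_right _ _ _
    have e2 : ⟪y, u - v⟫ = ⟪y, u⟫ - ⟪y, v⟫ := inner_sub_right _ _ _
    have e3 : ⟪x - y, u - v⟫ = ⟪x, u⟫ - ⟪x, v⟫ - ⟪y, u⟫ + ⟪y, v⟫ := by
      rw [inner_sub_left, inner_sub_right, inner_sub_right]; ring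
    have e4 : ‖v - u‖ = ‖u - v‖ := norm_sub_rev _ _
    rw [e4] at h1
    linarith
  have hCS : ⟪x - y, u - v⟫ ≤ ‖x - y‖ * ‖u - v‖ := real_inner_le_norm _ _
  rcases eq_or_ne u v with h | h
  · rw [h, sub_self, norm_zero]
    positivity
  · have hpos : 0 < ‖u - v‖ := by
      rw [norm_pos_iff, sub_ne_zero]; exact h
    rw [div_mul_eq_mul_div, le_div_iff₀ hK]
    nlinarith [hmono, hCS, hpos]
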